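/- Let (F_n) be a filtration and let (e_n) be a positive integer-valued adapted process and (e_n^{(k)}) a nonnegative integer-valued adapted process with e_n^{(k)} ≤ e_n. Suppose that for every n, conditionally on F_{n-1}^{+} = σ(F_{n-1}, M_n) with M_n a positive-integer random variable independent of F_{n-1}, we have e_n = e_{n-1} + M_n and e_n^{(k)} = e_{n-1}^{(k)} + B_n where B_n | F_{n-1}^{+} ~ Binomial(M_n, e_{n-1}^{(k)}/e_{n-1}). Then ζ_n = e_n^{(k)}/e_n satisfies E[ζ_n | F_{n-1}] = ζ_{n-1}; that is, (ζ_n, F_n) is a nonnegative martingale, and hence converges almost surely to a random variable ζ^{(k)}. -/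

import Mathlib

open MeasureTheory ProbabilityTheory Filter Finset
open scoped ENNReal

lemma binL1 (m : ℕ) (t : ℝ) :
    ∑ i ∈ range (m + 1), (m.choose i : ℝ) * t ^ i * (1 - t) ^ (m - i) = 1 := by
  have h := add_pow t (1 - t) m
  simp only [add_sub_cancel, one_pow] at h
  conv_rhs => rw [h]
  exact Finset.sum_congr rfl fun i _ => by ring

lemma binL2 (m : ℕ) (t : ℝ) :
    ∑ i ∈ range (m + 1), (i : ℝ) * ((m.choose i : ℝ) * t ^ i * (1 - t) ^ (m - i)) = m * t := by
  have h := bernsteinPolynomial.sum_smul ℝ m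
  have h2 := congrArg (Polynomial.eval t) h
  simp only [Polynomial.eval_finset_sum, Polynomial.eval_smul, bernsteinPolynomial,
    Polynomial.eval_mul, Polynomial.eval_pow, Polynomial.eval_sub, Polynomial.eval_one,
    Polynomial.eval_X, Polynomial.eval_natCast, nsmul_eq_mul, smul_eq_mul] at h2
  rw [← h2]

lemma binConv (m a E : ℕ) (hE : 0 < E) :
    ∑ i ∈ range (m + 1), (((a : ℝ) + i) / ((E : ℝ) + m)) *
      ((m.choose i : ℝ) * ((a : ℝ) / E) ^ i * (1 - (a : ℝ) / E) ^ (m - i)) = (a : ℝ) / E := by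
  have hE' : (0 : ℝ) < E := by exact_mod_cast hE
  have hEm : (0 : ℝ) < (E : ℝ) + m := by positivity
  have h1 := binL1 m ((a : ℝ) / E)
  have h2 := binL2 m ((a : ℝ) / E)
  have : ∑ i ∈ range (m + 1), (((a : ℝ) + i) / ((E : ℝ) + m)) *
      ((m.choose i : ℝ) * ((a : ℝ) / E) ^ i * (1 - (a : ℝ) / E) ^ (m - i))
      = ((a : ℝ) * (∑ i ∈ range (m + 1), (m.choose i : ℝ) * ((a:ℝ)/E) ^ i * (1 - (a:ℝ)/E) ^ (m - i))
        + ∑ i ∈ range (m + 1), (i : ℝ) * ((m.choose i : ℝ) * ((a:ℝ)/E) ^ i * (1 - (a:ℝ)/E) ^ (m - i)))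
        / ((E : ℝ) + m) := by
    rw [Finset.mul_sum, ← Finset.sum_add_distrib, Finset.sum_div]
    exact Finset.sum_congr rfl fun i _ => by ring
  rw [this, h1, h2]
  field_simp

lemma condexp_step {Ω : Type*} {m0 : MeasurableSpace Ω} (μ : Measure Ω) [IsProbabilityMeasure μ]
    {m : MeasurableSpace Ω} (hm : m ≤ m0)
    (M e0 ek0 e1 ek1 : Ω → ℕ)
    (hM : Measurable[m] M) (he0 : Measurable[m] e0) (hek0 : Measurable[m] ek0)
    (hek1 : Measurable[m0] ek1)
    (hepos : ∀ ω, 0 < e0 ω) (hle0 : ∀ ω, ek0 ω ≤ e0 ω) (hle1 : ∀ ω, ek1 ω ≤ e1 ω)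
    (hestep : ∀ ω, e1 ω = e0 ω + M ω)
    (hekstep : ∀ ω, ek0 ω ≤ ek1 ω)
    (hbinom : ∀ i : ℕ, (μ⟦{ω | ek1 ω = ek0 ω + i} | m⟧) =ᵐ[μ] fun ω =>
        ((M ω).choose i : ℝ) * ((ek0 ω : ℝ) / (e0 ω : ℝ)) ^ i *
          (1 - (ek0 ω : ℝ) / (e0 ω : ℝ)) ^ (M ω - i)) :
    μ[fun ω => (ek1 ω : ℝ) / (e1 ω : ℝ) | m] =ᵐ[μ] fun ω => (ek0 ω : ℝ) / (e0 ω : ℝ) := by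
  classical
  letI : MeasurableSpace Ω := m0
  set ζ0 : Ω → ℝ := fun ω => (ek0 ω : ℝ) / (e0 ω : ℝ) with hζ0
  set ζ1 : Ω → ℝ := fun ω => (ek1 ω : ℝ) / (e1 ω : ℝ) with hζ1
  set A : ℕ → Set Ω := fun i => {ω | ek1 ω = ek0 ω + i} with hA
  set c : ℕ → Ω → ℝ := fun i ω => ((ek0 ω : ℝ) + i) / ((e0 ω : ℝ) + M ω) with hc
  set p : ℕ → Ω → ℝ := fun i ω =>
    ((M ω).choose i : ℝ) * ζ0 ω ^ i * (1 - ζ0 ω) ^ (M ω - i) with hp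
  have he0pos : ∀ ω, (0:ℝ) < (e0 ω : ℝ) := fun ω => by exact_mod_cast hepos ω
  have hdenpos : ∀ ω, (0:ℝ) < (e0 ω : ℝ) + M ω := fun ω => by
    have := he0pos ω; positivity
  have hζ0mem : ∀ ω, ζ0 ω ∈ Set.Icc (0:ℝ) 1 := by
    intro ω
    constructor
    · positivity
    · rw [div_le_one (he0pos ω)]; exact_mod_cast hle0 ω
  have hζ1mem : ∀ ω, ζ1 ω ∈ Set.Icc (0:ℝ) 1 := by
    intro ω
    have h1pos : (0:ℝ) < (e1 ω : ℝ) := by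
      rw [hestep ω]; push_cast; have := he0pos ω; positivity
    constructor
    · positivity
    · rw [div_le_one h1pos]; exact_mod_cast hle1 ω
  -- measurability
  have hcastmeas : Measurable (fun n : ℕ => (n : ℝ)) := measurable_from_nat
  have he0R : Measurable[m] (fun ω => (e0 ω : ℝ)) := hcastmeas.comp he0
  have hek0R : Measurable[m] (fun ω => (ek0 ω : ℝ)) := hcastmeas.comp hek0
  have hMR : Measurable[m] (fun ω => (M ω : ℝ)) := hcastmeas.comp hM
  have hζ0meas : Measurable[m] ζ0 := hek0R.div he0R
  have hcmeas : ∀ i, Measurable[m] (c i) := fun i =>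
    (hek0R.add measurable_const).div (he0R.add hMR)
  have hpmeas : ∀ i, Measurable[m] (p i) := by
    intro i
    have h1 : Measurable[m] (fun ω => ((M ω).choose i : ℝ)) :=
      (measurable_from_nat (f := fun n : ℕ => ((n.choose i : ℕ) : ℝ))).comp hM
    have h2 : Measurable[m] (fun ω => ζ0 ω ^ i) := hζ0meas.pow_const i
    have h3 : Measurable[m] (fun ω => (1 - ζ0 ω) ^ (M ω - i)) :=
      (measurable_const.sub hζ0meas).pow ((measurable_from_nat (f := fun n : ℕ => n - i)).comp hM)
    exact (h1.mul h2).mul h3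
  have hAmeas : ∀ i, MeasurableSet[m0] (A i) := by
    intro i
    have hek0' : Measurable[m0] (fun ω => ek0 ω + i) :=
      (hek0.mono hm le_rfl).add measurable_const
    exact measurableSet_eq_fun hek1 hek0'
  have hdisj : Pairwise (Function.onFun Disjoint A) := by
    intro i j hij
    simp only [Function.onFun, Set.disjoint_left]
    intro ω hi hj
    simp only [hA, Set.mem_setOf_eq] at hi hj
    exact hij (by omega : i = j)
  have hμA : ∑' i, μ (A i) ≠ ∞ := by
    have h := measure_iUnion (μ := μ) hdisj hAmeas
    rw [← h]
    exact (measure_lt_top μ _).ne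
  have hμAsum : Summable fun i => (μ (A i)).toReal := ENNReal.summable_toReal hμA
  -- pointwise bounds
  have hc_nonneg : ∀ i ω, 0 ≤ c i ω := fun i ω => by
    have := hdenpos ω; positivity
  have hc_le_onA : ∀ i ω, ω ∈ A i → c i ω ≤ 1 := by
    intro i ω hω
    rw [div_le_one (hdenpos ω)]
    have : ek0 ω + i ≤ e0 ω + M ω := by
      rw [← hω, ← hestep ω]; exact hle1 ω
    exact_mod_cast this
  have hp_nonneg : ∀ i ω, 0 ≤ p i ω := by
    intro i ω
    have h1 := (hζ0mem ω).1; have h2 := (hζ0mem ω).2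
    have : (0:ℝ) ≤ 1 - ζ0 ω := by linarith
    positivity
  have hp_zero : ∀ i ω, M ω < i → p i ω = 0 := by
    intro i ω h
    simp [hp, Nat.choose_eq_zero_of_lt h]
  have hcp_le_one : ∀ i ω, c i ω * p i ω ≤ 1 := by
    intro i ω
    rcases le_or_gt i (M ω) with h | h
    · have hc1 : c i ω ≤ 1 := by
        rw [div_le_one (hdenpos ω)]
        have : ek0 ω + i ≤ e0 ω + M ω := add_le_add (hle0 ω) h
        exact_mod_cast this
      have hp1 : p i ω ≤ 1 := by
        have hmem : i ∈ range (M ω + 1) := by simp; omega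
        have := Finset.single_le_sum
          (f := fun j => ((M ω).choose j : ℝ) * ζ0 ω ^ j * (1 - ζ0 ω) ^ (M ω - j))
          (fun j _ => hp_nonneg j ω) hmem
        calc p i ω ≤ _ := this
          _ = 1 := binL1 (M ω) (ζ0 ω)
      calc c i ω * p i ω ≤ 1 * 1 := mul_le_mul hc1 hp1 (hp_nonneg i ω) zero_le_one
        _ = 1 := one_mul 1
    · rw [hp_zero i ω h, mul_zero]; exact zero_le_one
  -- pointwise sums
  have P1 : ∀ ω, ∑' i, (A i).indicator (c i) ω = ζ1 ω := by
    intro ω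
    have hmem : ω ∈ A (ek1 ω - ek0 ω) := by
      simp only [hA, Set.mem_setOf_eq]
      have := hekstep ω; omega
    rw [tsum_eq_single (ek1 ω - ek0 ω) ?_]
    · rw [Set.indicator_of_mem hmem]
      have h1 : (ek0 ω : ℝ) + ((ek1 ω - ek0 ω : ℕ) : ℝ) = (ek1 ω : ℝ) := by
        have h := hekstep ω
        push_cast [Nat.cast_sub (hekstep ω)]
        ring
      have h2 : (e1 ω : ℝ) = (e0 ω : ℝ) + (M ω : ℝ) := by
        rw [hestep ω]; push_cast; ring
      show ((ek0 ω : ℝ) + ((ek1 ω - ek0 ω : ℕ) : ℝ)) / ((e0 ω : ℝ) + (M ω : ℝ))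
          = (ek1 ω : ℝ) / (e1 ω : ℝ)
      rw [h1, h2]
    · intro j hj
      apply Set.indicator_of_notMem
      simp only [hA, Set.mem_setOf_eq]
      intro hcon
      exact hj (by omega)
  have P2 : ∀ ω, ∑' i, c i ω * p i ω = ζ0 ω := by
    intro ω
    rw [tsum_eq_sum (s := range (M ω + 1)) (fun i hi => by
      rw [hp_zero i ω (by simpa using hi), mul_zero])]
    exact binConv (M ω) (ek0 ω) (e0 ω) (hepos ω)
  -- integrability helper
  have hbd_int : ∀ (f : Ω → ℝ), AEStronglyMeasurable f μ → (C : ℝ) → (∀ ω, ‖f ω‖ ≤ C) →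
      Integrable f μ := fun f hf C h =>
    Integrable.mono' (integrable_const C) hf (Filter.Eventually.of_forall h)
  have hζ1meas : Measurable[m0] ζ1 := by
    have he1m : Measurable[m0] e1 := by
      have : e1 = fun ω => e0 ω + M ω := funext hestep
      rw [this]
      exact ((he0.mono hm le_rfl).add (hM.mono hm le_rfl))
    exact (hcastmeas.comp hek1).div (hcastmeas.comp he1m)
  have hζ1int : Integrable ζ1 μ := hbd_int ζ1 hζ1meas.aestronglyMeasurable 1 (fun ω => by
    rw [Real.norm_eq_abs, abs_of_nonneg (hζ1mem ω).1]; exact (hζ1mem ω).2)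
  have hζ0int : Integrable ζ0 μ := hbd_int ζ0
    ((hζ0meas.mono hm le_rfl).aestronglyMeasurable) 1 (fun ω => by
    rw [Real.norm_eq_abs, abs_of_nonneg (hζ0mem ω).1]; exact (hζ0mem ω).2)
  -- main set-integral identity
  have hg_eq : ∀ s : Set Ω, MeasurableSet[m] s → μ s < ∞ →
      ∫ ω in s, ζ0 ω ∂μ = ∫ ω in s, ζ1 ω ∂μ := by
    intro s hs _
    have hs0 : MeasurableSet[m0] s := hm s hs
    -- claim: per-index integral identity
    have claim : ∀ i, ∫ ω in s, (A i).indicator (c i) ω ∂μ = ∫ ω in s, c i ω * p i ω ∂μ := by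
      intro i
      have hf1 : Integrable ((A i).indicator (fun _ => (1:ℝ))) μ :=
        (integrable_const 1).indicator (hAmeas i)
      have hg : StronglyMeasurable[m] (s.indicator (c i)) :=
        ((hcmeas i).stronglyMeasurable).indicator hs
      have hprod_eq : ∀ ω, (s.indicator (c i) * (A i).indicator (fun _ => (1:ℝ))) ω
          = s.indicator ((A i).indicator (c i)) ω := by
        intro ω
        simp only [Pi.mul_apply, Set.indicator]
        by_cases h1 : ω ∈ s <;> by_cases h2 : ω ∈ A i <;> simp [h1, h2]
      have hfg_int : Integrable (s.indicator (c i) * (A i).indicator (fun _ => (1:ℝ))) μ := by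
        refine hbd_int _ ?_ 1 ?_
        · exact (((hcmeas i).mono hm le_rfl).indicator hs0).aestronglyMeasurable.mul
            ((measurable_const.indicator (hAmeas i)).aestronglyMeasurable)
        · intro ω
          rw [hprod_eq ω, Real.norm_eq_abs]
          simp only [Set.indicator]
          by_cases h1 : ω ∈ s <;> by_cases h2 : ω ∈ A i <;>
            simp [h1, h2, abs_of_nonneg (hc_nonneg i ω)]
          · exact hc_le_onA i ω h2
      have hmul := condExp_mul_of_stronglyMeasurable_left hg hfg_int hf1
      have key : ∫ ω, (s.indicator (c i) * (A i).indicator (fun _ => (1:ℝ))) ω ∂μ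
          = ∫ ω, s.indicator (c i) ω * p i ω ∂μ := by
        rw [← integral_condExp hm (f := s.indicator (c i) * (A i).indicator (fun _ => (1:ℝ)))]
        refine integral_congr_ae (hmul.trans ?_)
        filter_upwards [hbinom i] with ω hω
        simp only [Pi.mul_apply]
        rw [hω]
      have lhs_eq : ∫ ω, (s.indicator (c i) * (A i).indicator (fun _ => (1:ℝ))) ω ∂μ
          = ∫ ω in s, (A i).indicator (c i) ω ∂μ := by
        rw [← integral_indicator hs0]
        exact integral_congr_ae (Filter.Eventually.of_forall hprod_eq)
      have rhs_eq : ∫ ω, s.indicator (c i) ω * p i ω ∂μ = ∫ ω in s, c i ω * p i ω ∂μ := by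
        rw [← integral_indicator hs0]
        refine integral_congr_ae (Filter.Eventually.of_forall fun ω => ?_)
        simp only [Set.indicator]
        by_cases h1 : ω ∈ s <;> simp [h1]
      rw [← lhs_eq, key, rhs_eq]
    -- integrability of pieces on restrict
    have hind_int : ∀ i, Integrable ((A i).indicator (c i)) (μ.restrict s) := by
      intro i
      refine Integrable.restrict (hbd_int _ ?_ 1 ?_)
      · exact (((hcmeas i).mono hm le_rfl).indicator (hAmeas i)).aestronglyMeasurable
      · intro ω
        simp only [Set.indicator, Real.norm_eq_abs]
        by_cases h2 : ω ∈ A i <;> simp [h2, abs_of_nonneg (hc_nonneg i ω)]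
        · exact hc_le_onA i ω h2
    have hcp_int : ∀ i, Integrable (fun ω => c i ω * p i ω) (μ.restrict s) := by
      intro i
      refine Integrable.restrict (hbd_int _ ?_ 1 ?_)
      · exact (((hcmeas i).mul (hpmeas i)).mono hm le_rfl).aestronglyMeasurable
      · intro ω
        simp only [Real.norm_eq_abs]
        rw [abs_of_nonneg (mul_nonneg (hc_nonneg i ω) (hp_nonneg i ω))]
        exact hcp_le_one i ω
    -- summability
    have hnorm_eq : ∀ i, ∫ ω in s, ‖(A i).indicator (c i) ω‖ ∂μ
        = ∫ ω in s, (A i).indicator (c i) ω ∂μ := by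
      intro i
      refine integral_congr_ae (Filter.Eventually.of_forall fun ω => ?_)
      simp only [Real.norm_eq_abs]
      exact abs_of_nonneg (Set.indicator_nonneg (fun ω _ => hc_nonneg i ω) ω)
    have hSum1 : Summable fun i => ∫ ω in s, ‖(A i).indicator (c i) ω‖ ∂μ := by
      apply Summable.of_nonneg_of_le
        (fun i => integral_nonneg fun ω => norm_nonneg _)
        (fun i => ?_) hμAsum
      have hle' : ∀ ω, ‖(A i).indicator (c i) ω‖ ≤ (A i).indicator (fun _ => (1:ℝ)) ω := by
        intro ω
        simp only [Set.indicator, Real.norm_eq_abs]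
        by_cases h2 : ω ∈ A i <;> simp [h2, abs_of_nonneg (hc_nonneg i ω)]
        · exact hc_le_onA i ω h2
      calc ∫ ω in s, ‖(A i).indicator (c i) ω‖ ∂μ
          ≤ ∫ ω in s, (A i).indicator (fun _ => (1:ℝ)) ω ∂μ := by
            apply integral_mono ((hind_int i).norm) (((integrable_const 1).indicator
              (hAmeas i)).restrict) hle'
        _ ≤ ∫ ω, (A i).indicator (fun _ => (1:ℝ)) ω ∂μ := by
            apply integral_mono_measure Measure.restrict_le_self
            · exact Filter.Eventually.of_forall (Set.indicator_nonneg (fun _ _ => zero_le_one))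
            · exact (integrable_const 1).indicator (hAmeas i)
        _ = (μ (A i)).toReal := by
            rw [integral_indicator (hAmeas i)]; simp; rfl
    have hSum2 : Summable fun i => ∫ ω in s, ‖c i ω * p i ω‖ ∂μ := by
      refine hSum1.congr fun i => ?_
      rw [hnorm_eq i, claim i]
      refine integral_congr_ae (Filter.Eventually.of_forall fun ω => ?_)
      simp only [Real.norm_eq_abs]
      exact (abs_of_nonneg (mul_nonneg (hc_nonneg i ω) (hp_nonneg i ω))).symm
    -- the chain
    calc ∫ ω in s, ζ0 ω ∂μ
        = ∫ ω in s, ∑' i, c i ω * p i ω ∂μ :=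
          (integral_congr_ae (Filter.Eventually.of_forall fun ω => (P2 ω).symm))
      _ = ∑' i, ∫ ω in s, c i ω * p i ω ∂μ :=
          (integral_tsum_of_summable_integral_norm hcp_int hSum2).symm
      _ = ∑' i, ∫ ω in s, (A i).indicator (c i) ω ∂μ := by
          exact (tsum_congr fun i => (claim i).symm)
      _ = ∫ ω in s, ∑' i, (A i).indicator (c i) ω ∂μ :=
          integral_tsum_of_summable_integral_norm hind_int hSum1
      _ = ∫ ω in s, ζ1 ω ∂μ :=
          integral_congr_ae (Filter.Eventually.of_forall fun ω => P1 ω)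
  -- conclude
  have := ae_eq_condExp_of_forall_setIntegral_eq hm hζ1int
    (fun s _ _ => hζ0int.integrableOn) hg_eq
    (hζ0meas.stronglyMeasurable.aestronglyMeasurable)
  exact this.symm

/-- Edge-type ratio martingale in the generalized Barabási–Albert graph: at step `n+1`,
`M_{n+1}` new edges are added (`M_{n+1}` independent of `ℱ_n`), and the number of new
type-`k` edges is, conditionally on `𝒢_{n+1} = σ(ℱ_n, M_{n+1})`, binomial with
parameters `M_{n+1}` and the current type-`k` edge proportion. Then the proportion
`ζ_n = e_n^{(k)} / e_n` satisfies `E[ζ_{n+1} | ℱ_n] = ζ_n`, is a nonnegative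
martingale, and converges almost surely. -/
theorem edge_type_ratio_martingale_BA
    {Ω : Type*} {m0 : MeasurableSpace Ω} (μ : Measure Ω) [IsProbabilityMeasure μ]
    (ℱ : Filtration ℕ m0) (𝒢 : ℕ → MeasurableSpace Ω)
    (h𝒢₁ : ∀ n, ℱ n ≤ 𝒢 (n + 1)) (h𝒢₂ : ∀ n, 𝒢 (n + 1) ≤ ℱ (n + 1))
    (M : ℕ → Ω → ℕ) (e ek : ℕ → Ω → ℕ)
    (hMmeas : ∀ n, Measurable[𝒢 (n + 1)] (M (n + 1)))
    (hMpos : ∀ n ω, 0 < M (n + 1) ω)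
    (hMindep : ∀ n, Indep (MeasurableSpace.comap (M (n + 1)) inferInstance) (ℱ n) μ)
    (headapted : ∀ n, Measurable[ℱ n] (e n)) (hekadapted : ∀ n, Measurable[ℱ n] (ek n))
    (hepos : ∀ n ω, 0 < e n ω) (hle : ∀ n ω, ek n ω ≤ e n ω)
    (hestep : ∀ n ω, e (n + 1) ω = e n ω + M (n + 1) ω)
    (hekstep : ∀ n ω, ek n ω ≤ ek (n + 1) ω)
    (hbinom : ∀ n, ∀ i : ℕ,
      (μ⟦{ω | ek (n + 1) ω = ek n ω + i} | 𝒢 (n + 1)⟧) =ᵐ[μ] fun ω =>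
        ((M (n + 1) ω).choose i : ℝ) * ((ek n ω : ℝ) / (e n ω : ℝ)) ^ i *
          (1 - (ek n ω : ℝ) / (e n ω : ℝ)) ^ (M (n + 1) ω - i)) :
    (∀ n, μ[fun ω => (ek (n + 1) ω : ℝ) / (e (n + 1) ω : ℝ) | ℱ n]
        =ᵐ[μ] fun ω => (ek n ω : ℝ) / (e n ω : ℝ)) ∧
    Martingale (fun n ω => (ek n ω : ℝ) / (e n ω : ℝ)) ℱ μ ∧
    ∃ ζ : Ω → ℝ, ∀ᵐ ω ∂μ,
      Tendsto (fun n => (ek n ω : ℝ) / (e n ω : ℝ)) atTop (nhds (ζ ω)) := by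
  classical
  set ζ : ℕ → Ω → ℝ := fun n ω => (ek n ω : ℝ) / (e n ω : ℝ) with hζdef
  have hm𝒢 : ∀ n, 𝒢 (n + 1) ≤ m0 := fun n => (h𝒢₂ n).trans (ℱ.le (n + 1))
  have hζmeas : ∀ n, Measurable[ℱ n] (ζ n) := fun n =>
    (measurable_from_nat.comp (hekadapted n)).div (measurable_from_nat.comp (headapted n))
  have hζmem : ∀ n ω, ζ n ω ∈ Set.Icc (0:ℝ) 1 := by
    intro n ω
    have hp : (0:ℝ) < (e n ω : ℝ) := by exact_mod_cast hepos n ω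
    constructor
    · positivity
    · rw [div_le_one hp]; exact_mod_cast hle n ω
  have hζint : ∀ n, Integrable (ζ n) μ := by
    intro n
    refine Integrable.mono' (integrable_const (1:ℝ))
      (((hζmeas n).mono (ℱ.le n) le_rfl).aestronglyMeasurable)
      (Filter.Eventually.of_forall fun ω => ?_)
    rw [Real.norm_eq_abs, abs_of_nonneg (hζmem n ω).1]
    exact (hζmem n ω).2
  have hstep : ∀ n, μ[ζ (n + 1) | 𝒢 (n + 1)] =ᵐ[μ] ζ n := fun n =>
    condexp_step μ (hm𝒢 n) (M (n + 1)) (e n) (ek n) (e (n + 1)) (ek (n + 1))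
      (hMmeas n) ((headapted n).mono (h𝒢₁ n) le_rfl) ((hekadapted n).mono (h𝒢₁ n) le_rfl)
      ((hekadapted (n + 1)).mono (ℱ.le (n + 1)) le_rfl)
      (hepos n) (hle n) (hle (n + 1)) (hestep n) (hekstep n) (hbinom n)
  have hcond : ∀ n, μ[ζ (n + 1) | ℱ n] =ᵐ[μ] ζ n := by
    intro n
    have h1 : μ[ζ (n + 1) | ℱ n] =ᵐ[μ] μ[μ[ζ (n + 1) | 𝒢 (n + 1)] | ℱ n] :=
      (condExp_condExp_of_le (h𝒢₁ n) (hm𝒢 n)).symm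
    refine h1.trans ((condExp_congr_ae (hstep n)).trans ?_)
    rw [condExp_of_stronglyMeasurable (ℱ.le n) ((hζmeas n).stronglyMeasurable) (hζint n)]
  have hmart : Martingale ζ ℱ μ :=
    martingale_nat (fun n => (hζmeas n).stronglyMeasurable) hζint (fun n => (hcond n).symm)
  refine ⟨hcond, hmart, ?_⟩
  have hbdd : ∀ n, eLpNorm (ζ n) 1 μ ≤ ((1 : NNReal) : ENNReal) := by
    intro n
    calc eLpNorm (ζ n) 1 μ
        ≤ μ Set.univ ^ (1:ENNReal).toReal⁻¹ * ENNReal.ofReal 1 := by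
          refine eLpNorm_le_of_ae_bound (Filter.Eventually.of_forall fun ω => ?_)
          rw [Real.norm_eq_abs, abs_of_nonneg (hζmem n ω).1]
          exact (hζmem n ω).2
      _ = 1 := by simp
      _ = ((1 : NNReal) : ENNReal) := by simp
  exact ⟨ℱ.limitProcess ζ μ, hmart.submartingale.ae_tendsto_limitProcess hbdd⟩
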